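/- Let R be a d-dimensional cube of side length M·s tessellated into M^d identical subcubes of side s, and let an ordering of the subcubes be given such that any two consecutive subcubes are axis-neighbours (their centre vectors differ by exactly s in exactly one coordinate), as is the case for the M-ary Gray curve ordering. Let γ be the piecewise linear curve passing through the centres of the subcubes in this order. Then there is a constant c_d > 0, depending only on d, such that for any two subcubes that are not consecutive in the ordering and any points x1, x2 of γ lying in these two subcubes respectively, dist(x1, x2) ≥ c_d·s, where dist is the max-norm distance. -/
import Mathlib


open Set

noncomputable section

/-- The centre of the subcube with index vector `v ∈ {0, …, M-1}^d` of the tessellation of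
the cube with corner `a` into subcubes of side `s`. -/
def subcubeCentre {d : ℕ} (a : Fin d → ℝ) (s : ℝ) (v : Fin d → ℕ) : Fin d → ℝ :=
  fun k => a k + ((v k : ℝ) + 1 / 2) * s

/-- two naturals whose real casts are within less than 1 are equal -/
lemma nat_eq_of_cast_lt {m n : ℕ} (h1 : (m:ℝ) < n + 1) (h2 : (n:ℝ) < m + 1) : m = n := by
  have h1' : m < n + 1 := by exact_mod_cast h1
  have h2' : n < m + 1 := by exact_mod_cast h2
  omega

/-- an integer within 1/2 of a point of [n, n+1] is n or n+1 -/
lemma nat_mem_pair {m n : ℕ} {u : ℝ} (hl : (n:ℝ) ≤ u) (hr : u ≤ n + 1)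
    (h : |u - m| ≤ 1/2) : m = n ∨ m = n + 1 := by
  have h' := abs_le.1 h
  have h1 : (n:ℝ) < m + 1 := by linarith
  have h2 : (m:ℝ) < (n+1 : ℕ) + 1 := by push_cast; linarith
  have h1' : n < m + 1 := by exact_mod_cast h1
  have h2' : m < (n+1) + 1 := by exact_mod_cast h2
  omega

/-- bounds for a convex combination of `c` and `c+1` (in either order) -/
lemma interp_bounds {c θ x y : ℝ} (h0 : 0 ≤ θ) (h1 : θ ≤ 1)
    (hxy : (x = c ∧ y = c + 1) ∨ (y = c ∧ x = c + 1)) :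
    c ≤ (1-θ)*x + θ*y ∧ (1-θ)*x + θ*y ≤ c + 1 := by
  rcases hxy with ⟨hx, hy⟩ | ⟨hy, hx⟩ <;> subst hx <;> subst hy <;>
    constructor <;> nlinarith

/-- key arithmetic lemma for the collinear case -/
lemma keylem {n1 n2 m1 m2 : ℕ} {u1 u2 : ℝ}
    (h1lo : (n1:ℝ) ≤ u1) (h1hi : u1 ≤ n1 + 1)
    (h2lo : (n2:ℝ) ≤ u2) (h2hi : u2 ≤ n2 + 1)
    (hm1 : |u1 - m1| ≤ 1/2) (hm2 : |u2 - m2| ≤ 1/2)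
    (hc : |u1 - u2| < 1/2) (h12 : m2 = m1 + 1) : n1 = m1 ∧ n2 = m1 := by
  have hm1' := abs_le.1 hm1
  have hm2' := abs_le.1 hm2
  have hc' := abs_lt.1 hc
  have hm2c : (m2:ℝ) = m1 + 1 := by rw [h12]; push_cast; ring
  constructor
  · refine nat_eq_of_cast_lt ?_ ?_ <;> [skip; skip]
    · -- n1 < m1 + 1 : n1 ≤ u1 ≤ m1 + 1/2
      linarith
    · -- m1 < n1 + 1 : m1 < u1 ≤ n1 + 1 since u1 > u2 - 1/2 ≥ m2 - 1 = m1
      linarith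
  · refine nat_eq_of_cast_lt ?_ ?_
    · -- n2 ≤ u2 < u1 + 1/2 ≤ m1 + 1
      linarith
    · -- m1 + 1/2 = m2 - 1/2 ≤ u2 ≤ n2 + 1
      linarith

set_option maxHeartbeats 2000000

/-- Let a cube of side `M * s` be tessellated into `M^d` subcubes of side
`s`, and let an ordering `ord` of the subcubes be given (a bijection from `{0, …, M^d - 1}`
to the index vectors) such that consecutive subcubes are axis-neighbours, as for the M-ary
Gray curve.  Let `γ` be the piecewise linear curve through the centres of the subcubes in
this order.  Then there is a constant `c_d > 0` depending only on `d` such that any two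
points of `γ` lying in two subcubes that are not consecutive in the ordering are at max-norm
distance at least `c_d * s` from each other.  (Here `dist` on `Fin d → ℝ` is the sup-metric,
i.e. the max-norm distance, points of `γ` are parametrized as points of the segments joining
consecutive centres, and a point lies in the subcube `v` if each of its coordinates is within
`s / 2` of the centre of `v`.) -/
theorem statement_17 (d : ℕ) (hd : 1 ≤ d) :
    ∃ cd : ℝ, 0 < cd ∧
      ∀ (M : ℕ), 1 ≤ M → ∀ (s : ℝ), 0 < s → ∀ (a : Fin d → ℝ) (ord : ℕ → Fin d → ℕ),
        -- `ord` maps `{0, …, M^d - 1}` into the index vectors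
        (∀ t, t < M ^ d → ∀ k, ord t k < M) →
        -- injectivity
        (∀ t1 t2, t1 < M ^ d → t2 < M ^ d → ord t1 = ord t2 → t1 = t2) →
        -- surjectivity
        (∀ v : Fin d → ℕ, (∀ k, v k < M) → ∃ t < M ^ d, ord t = v) →
        -- consecutive subcubes are axis-neighbours: they differ in exactly one coordinate,
        -- and there by exactly one
        (∀ t, t + 1 < M ^ d → ∃ k : Fin d,
          (ord t k + 1 = ord (t + 1) k ∨ ord (t + 1) k + 1 = ord t k) ∧
          ∀ k' : Fin d, k' ≠ k → ord t k' = ord (t + 1) k') →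
        ∀ (p q i1 i2 : ℕ), p + 1 < M ^ d → q + 1 < M ^ d → i1 < M ^ d → i2 < M ^ d →
          -- the subcubes `ord i1` and `ord i2` are not consecutive in the ordering
          (i1 + 2 ≤ i2 ∨ i2 + 2 ≤ i1) →
          ∀ x1 x2 : Fin d → ℝ,
            -- `x1` and `x2` are points of the curve `γ`
            x1 ∈ segment ℝ (subcubeCentre a s (ord p)) (subcubeCentre a s (ord (p + 1))) →
            x2 ∈ segment ℝ (subcubeCentre a s (ord q)) (subcubeCentre a s (ord (q + 1))) →
            -- `x1` lies in the subcube `ord i1` and `x2` in the subcube `ord i2`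
            (∀ k, |x1 k - subcubeCentre a s (ord i1) k| ≤ s / 2) →
            (∀ k, |x2 k - subcubeCentre a s (ord i2) k| ≤ s / 2) →
            cd * s ≤ dist x1 x2 := by
  refine ⟨1/2, one_half_pos, ?_⟩
  intro M hM s hs a ord hrng hinj hsurj hnb p q i1 i2 hp hq hi1 hi2 hsep x1 x2 hx1 hx2 hc1 hc2
  by_contra hcon
  push_neg at hcon
  obtain ⟨k1, hdir1, hoff1⟩ := hnb p hp
  obtain ⟨k2, hdir2, hoff2⟩ := hnb q hq
  rw [segment_eq_image] at hx1 hx2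
  obtain ⟨θ1, hθ1, hx1e⟩ := hx1
  obtain ⟨θ2, hθ2, hx2e⟩ := hx2
  simp only [mem_Icc] at hθ1 hθ2
  obtain ⟨U1, hU1⟩ : ∃ U : Fin d → ℝ, ∀ k, U k = (1-θ1) * (ord p k) + θ1 * (ord (p+1) k) :=
    ⟨_, fun _ => rfl⟩
  obtain ⟨U2, hU2⟩ : ∃ U : Fin d → ℝ, ∀ k, U k = (1-θ2) * (ord q k) + θ2 * (ord (q+1) k) :=
    ⟨_, fun _ => rfl⟩
  have hx1k : ∀ k, x1 k = a k + (U1 k + 1/2) * s := by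
    intro k
    rw [← hx1e]
    simp only [Pi.add_apply, Pi.smul_apply, smul_eq_mul, subcubeCentre]
    rw [hU1 k]; ring
  have hx2k : ∀ k, x2 k = a k + (U2 k + 1/2) * s := by
    intro k
    rw [← hx2e]
    simp only [Pi.add_apply, Pi.smul_apply, smul_eq_mul, subcubeCentre]
    rw [hU2 k]; ring
  have hkey : ∀ t : ℝ, |t| * s ≤ s/2 → |t| ≤ 1/2 := by
    intro t h
    nlinarith [abs_nonneg t]
  have hkey' : ∀ t : ℝ, |t| * s < s/2 → |t| < 1/2 := by
    intro t h
    nlinarith [abs_nonneg t]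
  have hcube1 : ∀ k, |U1 k - ord i1 k| ≤ 1/2 := by
    intro k
    refine hkey _ ?_
    have := hc1 k
    rw [hx1k k] at this
    have heq : a k + (U1 k + 1/2) * s - subcubeCentre a s (ord i1) k
        = (U1 k - ord i1 k) * s := by
      simp only [subcubeCentre]; ring
    rw [heq, abs_mul, abs_of_pos hs] at this
    exact this
  have hcube2 : ∀ k, |U2 k - ord i2 k| ≤ 1/2 := by
    intro k
    refine hkey _ ?_
    have := hc2 k
    rw [hx2k k] at this
    have heq : a k + (U2 k + 1/2) * s - subcubeCentre a s (ord i2) k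
        = (U2 k - ord i2 k) * s := by
      simp only [subcubeCentre]; ring
    rw [heq, abs_mul, abs_of_pos hs] at this
    exact this
  have hclose : ∀ k, |U1 k - U2 k| < 1/2 := by
    intro k
    refine hkey' _ ?_
    have h1 : dist (x1 k) (x2 k) ≤ dist x1 x2 := dist_le_pi_dist x1 x2 k
    have h2 : dist (x1 k) (x2 k) < 1/2 * s := lt_of_le_of_lt h1 hcon
    rw [Real.dist_eq, hx1k k, hx2k k] at h2
    have heq : a k + (U1 k + 1/2) * s - (a k + (U2 k + 1/2) * s) = (U1 k - U2 k) * s := by ring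
    rw [heq, abs_mul, abs_of_pos hs] at h2
    linarith
  clear hcon hc1 hc2 hx1k hx2k hkey hkey' hx1e hx2e x1 x2 a hs s hsurj hrng hM hd
  -- off-direction values of U
  have hU1off : ∀ k, k ≠ k1 → U1 k = ord p k := by
    intro k hk
    rw [hU1 k, ← hoff1 k hk]
    ring
  have hU2off : ∀ k, k ≠ k2 → U2 k = ord q k := by
    intro k hk
    rw [hU2 k, ← hoff2 k hk]
    ring
  -- along-direction: U lies in the unit interval [n, n+1]
  obtain ⟨n1, hn1⟩ : ∃ n, n = min (ord p k1) (ord (p+1) k1) := ⟨_, rfl⟩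
  obtain ⟨n2, hn2⟩ : ∃ n, n = min (ord q k2) (ord (q+1) k2) := ⟨_, rfl⟩
  have hA1 : (ord p k1 = n1 ∧ ord (p+1) k1 = n1 + 1) ∨
      (ord (p+1) k1 = n1 ∧ ord p k1 = n1 + 1) := by omega
  have hA2 : (ord q k2 = n2 ∧ ord (q+1) k2 = n2 + 1) ∨
      (ord (q+1) k2 = n2 ∧ ord q k2 = n2 + 1) := by omega
  have hU1b : (n1:ℝ) ≤ U1 k1 ∧ U1 k1 ≤ n1 + 1 := by
    rw [hU1 k1]
    refine interp_bounds hθ1.1 hθ1.2 ?_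
    rcases hA1 with ⟨h1, h2⟩ | ⟨h1, h2⟩
    · exact Or.inl ⟨by exact_mod_cast congrArg (Nat.cast : ℕ → ℝ) h1,
        by push_cast [h2]; ring⟩
    · exact Or.inr ⟨by exact_mod_cast congrArg (Nat.cast : ℕ → ℝ) h1,
        by push_cast [h2]; ring⟩
  have hU2b : (n2:ℝ) ≤ U2 k2 ∧ U2 k2 ≤ n2 + 1 := by
    rw [hU2 k2]
    refine interp_bounds hθ2.1 hθ2.2 ?_
    rcases hA2 with ⟨h1, h2⟩ | ⟨h1, h2⟩
    · exact Or.inl ⟨by exact_mod_cast congrArg (Nat.cast : ℕ → ℝ) h1,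
        by push_cast [h2]; ring⟩
    · exact Or.inr ⟨by exact_mod_cast congrArg (Nat.cast : ℕ → ℝ) h1,
        by push_cast [h2]; ring⟩
  -- the cube i1 is one of the endpoints of the segment p
  have hI1off : ∀ k, k ≠ k1 → ord i1 k = ord p k := by
    intro k hk
    have h := hcube1 k
    rw [hU1off k hk] at h
    have h' := abs_le.1 h
    exact (nat_eq_of_cast_lt (by linarith) (by linarith))
  have hI2off : ∀ k, k ≠ k2 → ord i2 k = ord q k := by
    intro k hk
    have h := hcube2 k
    rw [hU2off k hk] at h
    have h' := abs_le.1 h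
    exact (nat_eq_of_cast_lt (by linarith) (by linarith))
  have hI1k1 : ord i1 k1 = n1 ∨ ord i1 k1 = n1 + 1 :=
    nat_mem_pair hU1b.1 hU1b.2 (hcube1 k1)
  have hI2k2 : ord i2 k2 = n2 ∨ ord i2 k2 = n2 + 1 :=
    nat_mem_pair hU2b.1 hU2b.2 (hcube2 k2)
  have hI1pair : ord i1 = ord p ∨ ord i1 = ord (p+1) := by
    have hval : ord i1 k1 = ord p k1 ∨ ord i1 k1 = ord (p+1) k1 := by omega
    rcases hval with hval | hval
    · left; funext k
      by_cases hk : k = k1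
      · rw [hk]; exact hval
      · exact hI1off k hk
    · right; funext k
      by_cases hk : k = k1
      · rw [hk]; exact hval
      · rw [hI1off k hk]; exact hoff1 k hk
  have hI2pair : ord i2 = ord q ∨ ord i2 = ord (q+1) := by
    have hval : ord i2 k2 = ord q k2 ∨ ord i2 k2 = ord (q+1) k2 := by omega
    rcases hval with hval | hval
    · left; funext k
      by_cases hk : k = k2
      · rw [hk]; exact hval
      · exact hI2off k hk
    · right; funext k
      by_cases hk : k = k2
      · rw [hk]; exact hval
      · rw [hI2off k hk]; exact hoff2 k hk
  have hip : i1 = p ∨ i1 = p + 1 := by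
    rcases hI1pair with h | h
    · exact Or.inl (hinj i1 p hi1 (by omega) h)
    · exact Or.inr (hinj i1 (p+1) hi1 hp h)
  have hiq : i2 = q ∨ i2 = q + 1 := by
    rcases hI2pair with h | h
    · exact Or.inl (hinj i2 q hi2 (by omega) h)
    · exact Or.inr (hinj i2 (q+1) hi2 hq h)
  by_cases hkk : k1 = k2
  · -- collinear case
    subst hkk
    have hoffeq : ∀ k, k ≠ k1 → ord p k = ord q k := by
      intro k hk
      have h := hclose k
      rw [hU1off k hk, hU2off k hk] at h
      have h' := abs_lt.1 h
      exact nat_eq_of_cast_lt (by linarith) (by linarith)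
    by_cases hαβ : ord i1 k1 = ord i2 k1
    · have : ord i1 = ord i2 := by
        funext k
        by_cases hk : k = k1
        · rw [hk]; exact hαβ
        · rw [hI1off k hk, hI2off k hk, hoffeq k hk]
      have := hinj i1 i2 hi1 hi2 this
      omega
    · -- |α - β| = 1
      have hab := hcube1 k1
      have hab2 := hcube2 k1
      have hcl := hclose k1
      have h1' := abs_le.1 hab
      have h2' := abs_le.1 hab2
      have hc' := abs_lt.1 hcl
      have hdiff : ord i2 k1 = ord i1 k1 + 1 ∨ ord i1 k1 = ord i2 k1 + 1 := by
        have e1 : (ord i1 k1 : ℝ) < ord i2 k1 + 2 := by linarith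
        have e2 : (ord i2 k1 : ℝ) < ord i1 k1 + 2 := by linarith
        have e1' : ord i1 k1 < ord i2 k1 + 2 := by exact_mod_cast e1
        have e2' : ord i2 k1 < ord i1 k1 + 2 := by exact_mod_cast e2
        omega
      have hset : n1 = n2 := by
        rcases hdiff with h12 | h12
        · have := keylem hU1b.1 hU1b.2 hU2b.1 hU2b.2 (hcube1 k1) (hcube2 k1) hcl h12
          omega
        · have := keylem hU2b.1 hU2b.2 hU1b.1 hU1b.2 (hcube2 k1) (hcube1 k1)
            (by rwa [abs_sub_comm] at hcl) h12
          omega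
      -- now the two segments have the same endpoint values at k1 (as a set {n1,n1+1})
      have hcases : ord p k1 = ord q k1 ∨
          (ord p k1 = ord (q+1) k1 ∧ ord (p+1) k1 = ord q k1) := by omega
      rcases hcases with hc0 | ⟨hc1', hc2'⟩
      · have : ord p = ord q := by
          funext k
          by_cases hk : k = k1
          · rw [hk]; exact hc0
          · exact hoffeq k hk
        have hpq := hinj p q (by omega) (by omega) this
        omega
      · have e1 : ord p = ord (q+1) := by
          funext k
          by_cases hk : k = k1
          · rw [hk]; exact hc1'
          · rw [hoffeq k hk]; exact hoff2 k hk
        have e2 : ord (p+1) = ord q := by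
          funext k
          by_cases hk : k = k1
          · rw [hk]; exact hc2'
          · rw [← hoff1 k hk, hoffeq k hk]
        have f1 := hinj p (q+1) (by omega) hq e1
        have f2 := hinj (p+1) q hp (by omega) e2
        omega
  · -- transversal case: k1 ≠ k2
    have hU2k1 : U2 k1 = ord q k1 := hU2off k1 hkk
    have hU1k2 : U1 k2 = ord p k2 := hU1off k2 (fun h => hkk h.symm)
    -- ord i1 k1 = ord q k1
    have hI1k1q : ord i1 k1 = ord q k1 := by
      have h1 := hcube1 k1
      have h2 := hclose k1
      rw [hU2k1] at h2
      have h1' := abs_le.1 h1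
      have h2' := abs_lt.1 h2
      exact nat_eq_of_cast_lt (by linarith) (by linarith)
    have hI2k2p : ord i2 k2 = ord p k2 := by
      have h1 := hcube2 k2
      have h2 := hclose k2
      rw [hU1k2] at h2
      have h1' := abs_le.1 h1
      have h2' := abs_lt.1 h2
      exact nat_eq_of_cast_lt (by linarith) (by linarith)
    have : ord i1 = ord i2 := by
      funext k
      by_cases hk : k = k1
      · subst hk
        rw [hI1k1q, hI2off k hkk]
      · by_cases hk2 : k = k2
        · subst hk2
          rw [hI2k2p, hI1off k (fun h => hkk h.symm)]
        · rw [hI1off k hk, hI2off k hk2]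
          have h := hclose k
          rw [hU1off k hk, hU2off k hk2] at h
          have h' := abs_lt.1 h
          exact nat_eq_of_cast_lt (by linarith) (by linarith)
    have := hinj i1 i2 hi1 hi2 this
    omega

end
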